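/- arXiv:2507.09946 — 5 statements merged into one kernel-verified Lean document; each statement's English description precedes it below -/
import Mathlib

section
/- Every functor f : A → B between small categories that is injective on objects, faithful, and conservative is right orthogonal to the inclusion functor from the walking arrow category 𝟚 = {0 → 1} into the walking isomorphism category 𝕀 = {0 ≅ 1}. -/
open CategoryTheory

/-- The walking isomorphism category `𝕀 = {0 ≅ 1}`: two objects, with exactly one
morphism between any two objects. -/
def WalkingIso : Type := Fin 2

instance : Category _root_.WalkingIso where
  Hom _ _ := PUnit
  id _ := PUnit.unit
  comp _ _ := PUnit.unit

/-- The inclusion of the walking arrow `𝟚 = {0 → 1}` (the preorder `Fin 2`)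
into the walking isomorphism `𝕀`. -/
def arrowToIso : (Fin 2) ⥤ _root_.WalkingIso where
  obj x := x
  map _ := PUnit.unit

instance (x y : _root_.WalkingIso) : Subsingleton (x ⟶ y) :=
  inferInstanceAs (Subsingleton PUnit)

lemma _root_.WalkingIso.hom_eq_id (x : _root_.WalkingIso) (g : x ⟶ x) : g = 𝟙 x :=
  Subsingleton.elim _ _

abbrev _root_.WalkingIso.zero : _root_.WalkingIso := (0 : Fin 2)
abbrev _root_.WalkingIso.one : _root_.WalkingIso := (1 : Fin 2)

lemma _root_.WalkingIso.map_isIso {C : Type u} [Category.{v} C] (v : _root_.WalkingIso ⥤ C)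
    (x y : _root_.WalkingIso) : IsIso (v.map (X := x) (Y := y) PUnit.unit) :=
  ⟨v.map (X := y) (Y := x) PUnit.unit,
    (v.map_comp _ _).symm.trans (v.map_id x),
    (v.map_comp _ _).symm.trans (v.map_id y)⟩

universe u v

def pick {C : Sort*} (X Y : C) : _root_.WalkingIso → C
  | ⟨0, _⟩ => X
  | ⟨1, _⟩ => Y

def pickHom {C : Type u} [Category.{v} C] {X Y : C} (e : X ≅ Y) :
    ∀ x y : _root_.WalkingIso, pick X Y x ⟶ pick X Y y
  | ⟨0, _⟩, ⟨0, _⟩ => 𝟙 X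
  | ⟨0, _⟩, ⟨1, _⟩ => e.hom
  | ⟨1, _⟩, ⟨0, _⟩ => e.inv
  | ⟨1, _⟩, ⟨1, _⟩ => 𝟙 Y

def _root_.WalkingIso.functorOfIso {C : Type u} [Category.{v} C] {X Y : C} (e : X ≅ Y) :
    _root_.WalkingIso ⥤ C where
  obj := pick X Y
  map {x y} _ := pickHom e x y
  map_id x := by
    obtain ⟨x, hx⟩ := x
    interval_cases x <;> rfl
  map_comp {x y z} g h := by
    obtain ⟨x, hx⟩ := x; obtain ⟨y, hy⟩ := y; obtain ⟨z, hz⟩ := z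
    interval_cases x <;> interval_cases y <;> interval_cases z <;>
      simp [pickHom, pick]

/-- Every injective-on-objects, faithful, conservative functor between small categories is
right orthogonal to the inclusion `𝟚 → 𝕀`: every commutative square admits a unique
diagonal filler. -/
theorem rightOrthogonal_arrowToIso_of_injOnObj_faithful_conservative
    {A B : Type} [SmallCategory A] [SmallCategory B] (f : A ⥤ B)
    (hinj : Function.Injective f.obj) (hfaith : f.Faithful)
    (hcons : f.ReflectsIsomorphisms)
    (u : (Fin 2) ⥤ A) (v : _root_.WalkingIso ⥤ B)
    (hsq : u ⋙ f = arrowToIso ⋙ v) :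
    ∃! d : _root_.WalkingIso ⥤ A, arrowToIso ⋙ d = u ∧ d ⋙ f = v := by
  have harr : ((0:Fin 2) ⟶ (1:Fin 2)) := homOfLE (by decide)
  set φ : u.obj 0 ⟶ u.obj 1 := u.map harr with hφdef
  have hfφ : f.map φ = eqToHom (Functor.congr_obj hsq 0) ≫
      v.map (X := _root_.WalkingIso.zero) (Y := _root_.WalkingIso.one) PUnit.unit ≫
      eqToHom (Functor.congr_obj hsq 1).symm := by
    have := Functor.congr_hom hsq harr
    simpa [arrowToIso] using this
  have hiso : IsIso φ := by
    have : IsIso (f.map φ) := by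
      rw [hfφ]
      have := _root_.WalkingIso.map_isIso v _root_.WalkingIso.zero _root_.WalkingIso.one
      exact @IsIso.comp_isIso _ _ _ _ _ _ _ (Iso.isIso_hom (eqToIso (Functor.congr_obj hsq 0))) (@IsIso.comp_isIso _ _ _ _ _ _ _ this (Iso.isIso_hom (eqToIso (Functor.congr_obj hsq 1).symm)))
    exact isIso_of_reflects_iso φ f
  set d : _root_.WalkingIso ⥤ A := _root_.WalkingIso.functorOfIso (asIso φ) with hddef
  -- first condition
  have hcond1 : arrowToIso ⋙ d = u := by
    refine CategoryTheory.Functor.ext (fun x => ?_) (fun x y g => ?_)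
    · obtain ⟨x, hx⟩ := x; interval_cases x <;> rfl
    · obtain ⟨x, hx⟩ := x; obtain ⟨y, hy⟩ := y
      have hle : x ≤ y := (leOfHom g : (⟨x,hx⟩ : Fin 2) ≤ ⟨y,hy⟩)
      interval_cases x <;> interval_cases y
      · have : g = 𝟙 _ := Subsingleton.elim _ _
        subst this
        simp [d, _root_.WalkingIso.functorOfIso, arrowToIso, pickHom]
        exact ((eqToHom_trans _ _).trans (eqToHom_refl _ _)).symm
      · have : g = harr := Subsingleton.elim _ _
        subst this
        simp [d, _root_.WalkingIso.functorOfIso, arrowToIso, pickHom, hφdef]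
        erw [eqToHom_refl, eqToHom_refl, Category.id_comp, Category.comp_id]
      · have : g = 𝟙 _ := Subsingleton.elim _ _
        subst this
        simp [d, _root_.WalkingIso.functorOfIso, arrowToIso, pickHom]
        exact ((eqToHom_trans _ _).trans (eqToHom_refl _ _)).symm
  -- second condition
  have hcond2 : d ⋙ f = v := by
    have hobj : ∀ x : _root_.WalkingIso, f.obj (d.obj x) = v.obj x := by
      intro x; obtain ⟨x, hx⟩ := x
      interval_cases x
      · exact Functor.congr_obj hsq 0
      · exact Functor.congr_obj hsq 1
    refine CategoryTheory.Functor.ext hobj (fun x y g => ?_)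
    obtain ⟨x, hx⟩ := x; obtain ⟨y, hy⟩ := y
    obtain rfl : g = PUnit.unit := rfl
    interval_cases x <;> interval_cases y
    · show f.map (𝟙 _) = _
      rw [_root_.WalkingIso.hom_eq_id _ (PUnit.unit : _root_.WalkingIso.zero ⟶ _root_.WalkingIso.zero)]
      simp
      erw [v.map_id]; simp
      rfl
    · show f.map φ = _
      rw [hfφ]
      rfl
    · show f.map (inv φ) = _
      have hinv : inv (f.map φ) = eqToHom (Functor.congr_obj hsq 1) ≫
          v.map (X := _root_.WalkingIso.one) (Y := _root_.WalkingIso.zero) PUnit.unit ≫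
          eqToHom (Functor.congr_obj hsq 0).symm := by
        have hvinst : IsIso (v.map (X := _root_.WalkingIso.zero) (Y := _root_.WalkingIso.one) PUnit.unit) :=
          _root_.WalkingIso.map_isIso v _ _
        have hvcomp : v.map (X := _root_.WalkingIso.zero) (Y := _root_.WalkingIso.one) PUnit.unit ≫
            v.map (X := _root_.WalkingIso.one) (Y := _root_.WalkingIso.zero) PUnit.unit = 𝟙 _ :=
          (v.map_comp _ _).symm.trans (v.map_id _)
        apply IsIso.inv_eq_of_hom_inv_id
        rw [hfφ]
        simp only [Category.assoc, eqToHom_trans_assoc, eqToHom_refl, Category.id_comp]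
        erw [Category.assoc, eqToHom_trans_assoc, eqToHom_refl, Category.id_comp, reassoc_of% hvcomp]
        simp
        exact (eqToHom_trans _ _).trans (eqToHom_refl _ _)
      rw [← f.map_inv φ] at hinv
      exact hinv
    · show f.map (𝟙 _) = _
      rw [_root_.WalkingIso.hom_eq_id _ (PUnit.unit : _root_.WalkingIso.one ⟶ _root_.WalkingIso.one)]
      simp
      erw [v.map_id]; simp
      rfl
  -- uniqueness
  have key : ∀ d' : _root_.WalkingIso ⥤ A, arrowToIso ⋙ d' = u → d' ⋙ f = v → d' = d := by
    intro d' h1u h1v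
    have hobj : ∀ x : _root_.WalkingIso, d'.obj x = d.obj x := fun x =>
      (Functor.congr_obj h1u x).trans (Functor.congr_obj hcond1 x).symm
    refine CategoryTheory.Functor.ext hobj (fun x y g => ?_)
    apply hfaith.map_injective
    have e1 := Functor.congr_hom h1v g
    have e2 := Functor.congr_hom hcond2 g
    simp only [Functor.comp_map] at e1 e2
    rw [f.map_comp, f.map_comp, eqToHom_map, eqToHom_map, e1, e2]
    simp
  exact ⟨d, ⟨hcond1, hcond2⟩, fun d' hd' => key d' hd'.1 hd'.2⟩
end

section
/- The inclusion functor 𝟚 → 𝕀 of the walking arrow into the walking isomorphism is an epimorphism in Cat. -/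
open CategoryTheory

/-- Every morphism in `WalkingIso` is invertible. -/
instance walkingIso_isIso {X Y : _root_.WalkingIso} (f : X ⟶ Y) : IsIso f :=
  ⟨PUnit.unit, rfl, rfl⟩

def i0 : _root_.WalkingIso := (0 : Fin 2)
def i1 : _root_.WalkingIso := (1 : Fin 2)

/-- The inclusion `𝟚 → 𝕀` of the walking arrow into the walking isomorphism is an
epimorphism in `Cat`. -/
theorem arrowToIso_epi :
    Epi (show Cat.of (Fin 2) ⟶ Cat.of _root_.WalkingIso from arrowToIso.toCatHom) := by
  constructor
  intro Z g h eq
  rcases g with ⟨g⟩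
  rcases h with ⟨h⟩
  apply Cat.ext
  dsimp only
  have eq' : arrowToIso ⋙ g = arrowToIso ⋙ h := congrArg Cat.Hom.toFunctor eq
  clear eq
  revert g h
  intro (g : _root_.WalkingIso ⥤ Z) (h : _root_.WalkingIso ⥤ Z) eq'
  have hobj : ∀ x : _root_.WalkingIso, g.obj x = h.obj x := fun x => Functor.congr_obj eq' x
  let d : i0 ⟶ i1 := PUnit.unit
  have hd : g.map d = eqToHom (hobj i0) ≫ h.map d ≫ eqToHom (hobj i1).symm := by
    exact Functor.congr_hom eq' (homOfLE (by decide : (0:Fin 2) ≤ 1))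
  refine CategoryTheory.Functor.ext hobj ?_
  intro X Y f
  obtain ⟨⟩ := f
  have key : ∀ x : _root_.WalkingIso, x = i0 ∨ x = i1 := by
    intro x
    exact (show (show Fin 2 from x) = 0 ∨ (show Fin 2 from x) = 1 by omega)
  have hX := key X
  have hY := key Y
  rcases hX with rfl | rfl <;> rcases hY with rfl | rfl
  · have : (PUnit.unit : i0 ⟶ i0) = 𝟙 i0 := rfl
    rw [this]; simp
  · exact hd
  · have hu : (PUnit.unit : i1 ⟶ i0) = inv d :=
      IsIso.eq_inv_of_hom_inv_id (f := d) rfl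
    rw [hu, g.map_inv, h.map_inv]
    simp only [hd]
    simp
  · have : (PUnit.unit : i1 ⟶ i1) = 𝟙 i1 := rfl
    rw [this]; simp
end

section
/- Let f : A → B be a functor between small categories and let C be the smallest subcategory of B containing all objects f(a), all morphisms f(h), and closed under inverses of those of its morphisms that are invertible in B. If C = B (i.e., C contains all objects and morphisms of B), then f is an epimorphism in Cat. -/
open CategoryTheory

/-- Membership in the smallest subcategory `C = \overline{f(A)}` of `B` containing the image
of `f` and closed under composition and under inverses (in `B`) of its invertible
morphisms. -/
inductive InClosure {A B : Type} [Category A] [Category B] (f : A ⥤ B) :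
    ∀ {x y : B}, (x ⟶ y) → Prop
  | img {a a' : A} (h : a ⟶ a') : InClosure f (f.map h)
  | comp {x y z : B} {g : x ⟶ y} {g' : y ⟶ z} :
      InClosure f g → InClosure f g' → InClosure f (g ≫ g')
  | inv {x y : B} (g : x ⟶ y) (g' : y ⟶ x)
      (hl : g ≫ g' = 𝟙 x) (hr : g' ≫ g = 𝟙 y) :
      InClosure f g → InClosure f g'

lemma InClosure.agree {A B D : Type} [Category A] [Category B] [Category D]
    (f : A ⥤ B) (u v : B ⥤ D) (huv : f ⋙ u = f ⋙ v)
    {x y : B} (k : x ⟶ y) (hk : InClosure f k) :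
    ∃ (hx : u.obj x = v.obj x) (hy : u.obj y = v.obj y),
      u.map k = eqToHom hx ≫ v.map k ≫ eqToHom hy.symm := by
  induction hk with
  | img h =>
      refine ⟨Functor.congr_obj huv _, Functor.congr_obj huv _, ?_⟩
      exact Functor.congr_hom huv h
  | comp hg hg' ihg ihg' =>
      obtain ⟨hx, hy, e⟩ := ihg
      obtain ⟨hy', hz, e'⟩ := ihg'
      refine ⟨hx, hz, ?_⟩
      rw [Functor.map_comp, Functor.map_comp, e, e']
      simp
  | inv g g' hl hr hg ih =>
      obtain ⟨hx, hy, e⟩ := ih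
      refine ⟨hy, hx, ?_⟩
      have h1 : u.map g ≫ (eqToHom hy ≫ v.map g' ≫ eqToHom hx.symm) = 𝟙 _ := by
        rw [e]
        simp only [Category.assoc, eqToHom_trans_assoc, eqToHom_refl, Category.id_comp]
        rw [← Category.assoc (v.map g), ← Functor.map_comp, hl]
        simp
      calc u.map g' = u.map g' ≫ u.map g ≫ (eqToHom hy ≫ v.map g' ≫ eqToHom hx.symm) := by
            rw [h1]; simp
        _ = u.map (g' ≫ g) ≫ (eqToHom hy ≫ v.map g' ≫ eqToHom hx.symm) := by
            rw [Functor.map_comp, Category.assoc]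
        _ = eqToHom hy ≫ v.map g' ≫ eqToHom hx.symm := by
            rw [hr]; simp

/-- If the closure `\overline{f(A)}` contains every morphism of `B`, then `f` is an
epimorphism in `Cat`. -/
theorem epi_of_closure_eq_top (A B : Cat.{0,0}) (f : A ⟶ B)
    (hall : ∀ ⦃x y : B⦄ (g : x ⟶ y), InClosure f.toFunctor g) :
    Epi f := by
  constructor
  intro D u v huv
  have huv' : f.toFunctor ⋙ u.toFunctor = f.toFunctor ⋙ v.toFunctor := congrArg Cat.Hom.toFunctor huv
  have := CategoryTheory.Functor.ext (F := u.toFunctor) (G := v.toFunctor)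
    (fun x => (InClosure.agree f.toFunctor u.toFunctor v.toFunctor huv' (𝟙 x) (hall (𝟙 x))).choose)
    (fun x y k => (InClosure.agree f.toFunctor u.toFunctor v.toFunctor huv' k (hall k)).choose_spec.choose_spec)
  exact Cat.ext this
end

section
/- For any functor f : A → B between small categories, f factors as f = m ∘ e where e : A → \overline{f(A)} is the codomain restriction of f (which is an epimorphism in Cat) and m : \overline{f(A)} → B is the subcategory inclusion (which is injective on objects, faithful, and conservative). -/
open CategoryTheory

/-- The subcategory `\overline{f(A)}` of `B`: objects are the objects in the image of `f`,
morphisms are the morphisms of the closure. -/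
def ImageClosure {A B : Type} [Category A] [Category B] (f : A ⥤ B) : Type :=
  { b : B // ∃ a : A, f.obj a = b }

instance {A B : Type} [Category A] [Category B] (f : A ⥤ B) :
    Category (ImageClosure f) where
  Hom x y := { g : x.1 ⟶ y.1 // InClosure f g }
  id x := ⟨𝟙 x.1, by
    obtain ⟨b, a, rfl⟩ := x
    simpa using InClosure.img (f := f) (𝟙 a)⟩
  comp g h := ⟨g.1 ≫ h.1, InClosure.comp g.2 h.2⟩
  id_comp g := by apply Subtype.ext; simp
  comp_id g := by apply Subtype.ext; simp
  assoc g h k := by apply Subtype.ext; simp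

/-- The codomain restriction `e : A → \overline{f(A)}` of `f`. -/
def codRestriction {A B : Type} [Category A] [Category B] (f : A ⥤ B) :
    A ⥤ ImageClosure f where
  obj a := ⟨f.obj a, a, rfl⟩
  map h := ⟨f.map h, InClosure.img h⟩
  map_id a := Subtype.ext (f.map_id a)
  map_comp g h := Subtype.ext (f.map_comp g h)

/-- The inclusion `m : \overline{f(A)} → B`. -/
def closureInclusion {A B : Type} [Category A] [Category B] (f : A ⥤ B) :
    ImageClosure f ⥤ B where
  obj x := x.1
  map g := g.1


section Aux

variable {A B : Type} [Category A] [Category B] (f : A ⥤ B)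

lemma map_inv_eq {C : Type*} {D : Type*} [Category C] [Category D] {G H : C ⥤ D}
    {X Y : C} {u : X ⟶ Y} {v : Y ⟶ X} (huv : u ≫ v = 𝟙 X) (hvu : v ≫ u = 𝟙 Y)
    {p : G.obj X = H.obj X} {q : G.obj Y = H.obj Y}
    (h : G.map u = eqToHom p ≫ H.map u ≫ eqToHom q.symm) :
    G.map v = eqToHom q ≫ H.map v ≫ eqToHom p.symm := by
  have h2 : G.map v ≫ G.map u = 𝟙 _ := by rw [← G.map_comp, hvu, G.map_id]
  have h3 : H.map u ≫ H.map v = 𝟙 _ := by rw [← H.map_comp, huv, H.map_id]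
  have key : G.map u ≫ eqToHom q ≫ H.map v ≫ eqToHom p.symm = 𝟙 _ := by
    rw [h]
    simp [reassoc_of% h3]
  calc G.map v = G.map v ≫ (G.map u ≫ eqToHom q ≫ H.map v ≫ eqToHom p.symm) := by
        rw [key, Category.comp_id]
    _ = (G.map v ≫ G.map u) ≫ eqToHom q ≫ H.map v ≫ eqToHom p.symm := by
        simp only [Category.assoc]
    _ = eqToHom q ≫ H.map v ≫ eqToHom p.symm := by rw [h2, Category.id_comp]

/-- Helper to build a morphism in the closure category. -/
def mkHom {A B : Type} [Category A] [Category B] {f : A ⥤ B} (x y : ImageClosure f)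
    (g : x.1 ⟶ y.1) (hg : InClosure f g) : x ⟶ y := ⟨g, hg⟩

lemma inClosure_endpoints {x y : B} {g : x ⟶ y} (hg : InClosure f g) :
    (∃ a, f.obj a = x) ∧ (∃ a, f.obj a = y) := by
  induction hg with
  | img h => exact ⟨⟨_, rfl⟩, ⟨_, rfl⟩⟩
  | comp _ _ ih1 ih2 => exact ⟨ih1.1, ih2.2⟩
  | inv g g' hl hr _ ih => exact ⟨ih.2, ih.1⟩

variable {C : Type} [Category C] {G H : ImageClosure f ⥤ C}
  (hGH : codRestriction f ⋙ G = codRestriction f ⋙ H)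

include hGH

lemma closure_obj_eq (x : ImageClosure f) : G.obj x = H.obj x := by
  obtain ⟨b, a, rfl⟩ := x
  exact Functor.congr_obj hGH a

lemma closure_map_eq : ∀ {x y : B} (g : x ⟶ y) (hg : InClosure f g)
    (hx : ∃ a, f.obj a = x) (hy : ∃ a, f.obj a = y),
    G.map (mkHom ⟨x, hx⟩ ⟨y, hy⟩ g hg) =
      eqToHom (closure_obj_eq f hGH ⟨x, hx⟩) ≫
        H.map (mkHom ⟨x, hx⟩ ⟨y, hy⟩ g hg) ≫
          eqToHom (closure_obj_eq f hGH ⟨y, hy⟩).symm := by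
  intro x y g hg
  induction hg with
  | @img a a' h =>
    intro hx hy
    have := Functor.congr_hom hGH h
    exact this
  | @comp x y z g g' hg hg' ih1 ih2 =>
    intro hx hz
    have hy : ∃ a, f.obj a = y := (inClosure_endpoints f hg).2
    have e1 : mkHom (f := f) ⟨x, hx⟩ ⟨z, hz⟩ (g ≫ g') (InClosure.comp hg hg') =
        mkHom ⟨x, hx⟩ ⟨y, hy⟩ g hg ≫ mkHom ⟨y, hy⟩ ⟨z, hz⟩ g' hg' :=
      Subtype.ext rfl
    rw [e1]
    erw [G.map_comp, H.map_comp]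
    rw [ih1 hx hy, ih2 hy hz]
    simp
  | @inv x y g g' hl hr hg ih =>
    intro hy hx
    exact map_inv_eq (Subtype.ext hl) (Subtype.ext hr) (ih hx hy)

lemma closure_functor_ext : G = H := by
  refine CategoryTheory.Functor.ext (closure_obj_eq f hGH) ?_
  rintro ⟨x, hx⟩ ⟨y, hy⟩ ⟨g, hg⟩
  exact closure_map_eq f hGH g hg hx hy

end Aux

/-- Every functor `f : A → B` between small categories factors as `f = m ∘ e` where
`e : A → \overline{f(A)}` is the codomain restriction (an epimorphism in `Cat`) and
`m : \overline{f(A)} → B` is the subcategory inclusion (injective on objects, faithful,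
and conservative). -/
theorem factorization_through_closure {A B : Type} [SmallCategory A] [SmallCategory B]
    (f : A ⥤ B) :
    codRestriction f ⋙ closureInclusion f = f ∧
      Epi (show Cat.of A ⟶ Cat.of (ImageClosure f) from (codRestriction f).toCatHom) ∧
      Function.Injective (closureInclusion f).obj ∧
      (closureInclusion f).Faithful ∧
      (closureInclusion f).ReflectsIsomorphisms := by
  refine ⟨rfl, ?_, ?_, ?_, ?_⟩
  · constructor
    intro Z g h hgh
    exact Cat.Hom.ext (closure_functor_ext f (congrArg Cat.Hom.toFunctor hgh))
  · intro x y h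
    exact Subtype.ext h
  · exact ⟨fun h => Subtype.ext h⟩
  · constructor
    intro x y g hg
    haveI : IsIso g.1 := hg
    exact ⟨⟨⟨CategoryTheory.inv g.1,
      InClosure.inv g.1 (CategoryTheory.inv g.1) (by simp) (by simp) g.2⟩,
      Subtype.ext (IsIso.hom_inv_id g.1), Subtype.ext (IsIso.inv_hom_id g.1)⟩⟩
end

section
/- In the category ω-CPO of posets with joins of ω-chains and maps preserving them, the classes (dense maps, join-reflecting embeddings) form a factorization: every morphism factors as a dense map followed by an order-reflecting embedding that reflects joins of ω-chains, where a map is dense if the closure of its image under joins of ω-chains is the whole codomain. -/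
open OmegaCompletePartialOrder

/-- Membership in the closure of a set under joins of ω-chains: the least subset
containing `S` and closed under `ωSup` of chains. -/
inductive OmegaChainClosure {Y : Type} [OmegaCompletePartialOrder Y] (S : Set Y) : Y → Prop
  | of {y : Y} : y ∈ S → OmegaChainClosure S y
  | sup (c : Chain Y) : (∀ n : ℕ, OmegaChainClosure S (c n)) → OmegaChainClosure S (ωSup c)

/-- In `ω-CPO`, every morphism factors as a dense map followed by an order-reflecting
embedding that reflects joins of ω-chains. -/
theorem omegaCPO_dense_joinReflecting_factorization
    (X Y : Type) [OmegaCompletePartialOrder X] [OmegaCompletePartialOrder Y]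
    (f : X →𝒄 Y) :
    ∃ (Z : Type) (_ : OmegaCompletePartialOrder Z) (e : X →𝒄 Z) (m : Z →𝒄 Y),
      (∀ z : Z, OmegaChainClosure (Set.range e) z) ∧
      (∀ a b : Z, m a ≤ m b → a ≤ b) ∧
      Function.Injective m ∧
      (∀ (c : Chain Z) (z : Z), m z = ωSup (c.map m.toOrderHom) → z = ωSup c) ∧
      (∀ x : X, m (e x) = f x) := by
  set p : Y → Prop := OmegaChainClosure (Set.range f) with hp
  have hclosed : ∀ c : Chain Y, (∀ i ∈ c, p i) → p (ωSup c) := by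
    intro c hc
    exact OmegaChainClosure.sup c fun n => hc _ ⟨n, rfl⟩
  letI : OmegaCompletePartialOrder (Subtype p) :=
    OmegaCompletePartialOrder.subtype p hclosed
  refine ⟨Subtype p, inferInstance, ?_, ?_, ?_, ?_, ?_, ?_, ?_⟩
  · -- e
    exact { toFun := fun x => ⟨f x, OmegaChainClosure.of ⟨x, rfl⟩⟩
            monotone' := fun a b h => f.monotone h
            map_ωSup' := fun c => Subtype.ext (f.map_ωSup' c) }
  · -- m
    exact { toFun := Subtype.val
            monotone' := fun a b h => h
            map_ωSup' := fun c => rfl }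
  · -- density
    intro z
    obtain ⟨y, hy⟩ := z
    induction hy with
    | of h =>
      obtain ⟨x, rfl⟩ := h
      exact OmegaChainClosure.of ⟨x, rfl⟩
    | sup c hc ih =>
      have hn : ∀ n, p (c n) := hc
      let c' : Chain (Subtype p) :=
        ⟨fun n => ⟨c n, hn n⟩, fun a b h => c.monotone h⟩
      have hval : (ωSup c' : Subtype p).val = ωSup c := by
        have : c'.map (OrderHom.Subtype.val p) = c := by
          apply Chain.ext; rfl
        show ωSup (c'.map (OrderHom.Subtype.val p)) = ωSup c
        rw [this]
      have hz : OmegaChainClosure (Set.range _) (ωSup c') :=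
        OmegaChainClosure.sup c' fun n => ih n
      have heq : (ωSup c' : Subtype p) = ⟨ωSup c, OmegaChainClosure.sup c hc⟩ :=
        Subtype.ext hval
      exact heq ▸ hz
  · exact fun a b h => h
  · exact fun a b h => Subtype.ext h
  · intro c z h
    exact Subtype.ext h
  · intro x; rfl
end
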